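/- Let n, ℓ, ℓ', ς be natural numbers with n ≥ 1, ℓ ≥ 1, ℓ' ≥ 1, and set a = ℓ·ℓ'/(ℓ+ℓ') ∈ ℚ. If ∑_{m=0}^{ς} C(n+m−1, m)·(a − m) ≤ 0, then ς·(ℓ+ℓ')·n ≥ ℓ·ℓ'·(n+1). Moreover, ∑_{m=0}^{ς} C(n+m−1, m)·(a − m) = 0 if and only if ς·(ℓ+ℓ')·n = ℓ·ℓ'·(n+1). -/

import Mathlib

lemma key_sum (n ς : ℕ) (a : ℚ) :
    ∑ m ∈ Finset.range (ς + 1), ((n + m - 1).choose m : ℚ) * (a - m)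
      = ((n + ς).choose ς : ℚ) * (a - n * ς / (n + 1)) := by
  induction ς with
  | zero => simp
  | succ k ih =>
    rw [Finset.sum_range_succ, ih]
    have h1 : n + (k + 1) - 1 = n + k := by omega
    rw [h1]
    have hp : ((n + k + 1).choose (k + 1) : ℚ)
        = (n + k).choose k + (n + k).choose (k + 1) := by
      exact_mod_cast congrArg (Nat.cast : ℕ → ℚ) (Nat.choose_succ_succ (n + k) k)
    have hq : ((n + k).choose (k + 1) : ℚ) * ((k : ℚ) + 1)
        = ((n + k).choose k : ℚ) * n := by
      have h := Nat.choose_succ_right_eq (n + k) k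
      have h2 : n + k - k = n := by omega
      rw [h2] at h
      exact_mod_cast h
    have hne : ((n : ℚ) + 1) ≠ 0 := by positivity
    have hcast : ((n + (k + 1) : ℕ) : ℚ) = (n : ℚ) + k + 1 := by push_cast; ring
    have hcast2 : (((n + (k + 1)).choose (k + 1) : ℕ) : ℚ)
        = ((n + k + 1).choose (k + 1) : ℚ) := by norm_num [Nat.add_assoc]
    rw [hcast2, hp]
    push_cast
    have hne' : ((n:ℚ)+1) ≠ 0 := hne
    field_simp
    linear_combination (-(1:ℚ)) * hq

theorem stmt_3 (n ℓ ℓ' ς : ℕ) (hn : 1 ≤ n) (hℓ : 1 ≤ ℓ) (hℓ' : 1 ≤ ℓ')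
    (a : ℚ) (ha : a = (ℓ * ℓ' : ℚ) / (ℓ + ℓ')) :
    ((∑ m ∈ Finset.range (ς + 1), ((n + m - 1).choose m : ℚ) * (a - m)) ≤ 0 →
      ℓ * ℓ' * (n + 1) ≤ ς * (ℓ + ℓ') * n) ∧
    ((∑ m ∈ Finset.range (ς + 1), ((n + m - 1).choose m : ℚ) * (a - m)) = 0 ↔
      ς * (ℓ + ℓ') * n = ℓ * ℓ' * (n + 1)) := by
  rw [key_sum]
  have hC : (0 : ℚ) < ((n + ς).choose ς : ℚ) := by
    exact_mod_cast Nat.choose_pos (Nat.le_add_left ς n)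
  have hd : (0 : ℚ) < (ℓ : ℚ) + ℓ' := by
    have : (1 : ℚ) ≤ (ℓ : ℚ) := by exact_mod_cast hℓ
    have : (1 : ℚ) ≤ (ℓ' : ℚ) := by exact_mod_cast hℓ'
    linarith
  have hn1 : (0 : ℚ) < (n : ℚ) + 1 := by positivity
  have hiff : a - n * ς / (n + 1) ≤ 0 ↔
      (ℓ * ℓ' * (n + 1) : ℚ) ≤ ς * (ℓ + ℓ') * n := by
    rw [ha, sub_nonpos, div_le_div_iff₀ hd hn1]
    constructor <;> intro h <;> nlinarith
  have hiff2 : a - n * ς / (n + 1) = 0 ↔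
      (ς * (ℓ + ℓ') * n : ℚ) = ℓ * ℓ' * (n + 1) := by
    rw [ha, sub_eq_zero, div_eq_div_iff hd.ne' hn1.ne']
    constructor <;> intro h <;> nlinarith
  constructor
  · intro h
    have h2 : a - n * ς / (n + 1) ≤ 0 := by
      by_contra h'
      push_neg at h'
      nlinarith
    have := hiff.mp h2
    exact_mod_cast this
  · constructor
    · intro h
      have h2 : a - n * ς / (n + 1) = 0 := by
        rcases mul_eq_zero.mp h with h3 | h3
        · exact absurd h3 (ne_of_gt hC)
        · exact h3
      exact_mod_cast hiff2.mp h2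
    · intro h
      have h2 : (ς * (ℓ + ℓ') * n : ℚ) = ℓ * ℓ' * (n + 1) := by exact_mod_cast h
      rw [hiff2.mpr h2, mul_zero]
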